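/- arXiv:1606.05880 — 4 statements merged into one kernel-verified Lean document; each statement's English description precedes it below -/
import Mathlib

section
/- Let P₁, …, P_N be N points on the unit sphere S² ⊂ ℝ³, and for each j let d_j be the minimum Euclidean distance from P_j to the other points. Then ∑_{j=1}^N d_j² ≤ 16. In particular the average of the d_j is at most 4/√N. -/
open Finset

local notation "E3" => EuclideanSpace ℝ (Fin 3)

section Aux

open MeasureTheory Real Set

lemma disk_vol (s : ℝ) :
    volume {p : Fin 2 → ℝ | p 0 ^ 2 + p 1 ^ 2 < s} = ENNReal.ofReal (π * s) := by
  rcases le_or_gt s 0 with hs | hs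
  · have h1 : {p : Fin 2 → ℝ | p 0 ^ 2 + p 1 ^ 2 < s} = ∅ := by
      ext p; simp only [mem_setOf_eq, mem_empty_iff_false, iff_false, not_lt]
      nlinarith [sq_nonneg (p 0), sq_nonneg (p 1)]
    rw [h1, measure_empty, Eq.comm, ENNReal.ofReal_eq_zero]
    nlinarith [pi_pos]
  · have e := EuclideanSpace.volume_preserving_symm_measurableEquiv_toLp (Fin 2)
    have hmeas : MeasurableSet {p : Fin 2 → ℝ | p 0 ^ 2 + p 1 ^ 2 < s} := by
      apply measurableSet_lt <;> fun_prop
    rw [← e.measure_preimage hmeas.nullMeasurableSet]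
    have hset : (MeasurableEquiv.toLp 2 (Fin 2 → ℝ)).symm ⁻¹'
        {p : Fin 2 → ℝ | p 0 ^ 2 + p 1 ^ 2 < s}
        = Metric.ball (0 : EuclideanSpace ℝ (Fin 2)) (√s) := by
      rw [EuclideanSpace.ball_zero_eq _ (Real.sqrt_nonneg s)]
      ext y
      simp [Fin.sum_univ_two, Real.sq_sqrt hs.le]
    rw [hset, EuclideanSpace.volume_ball]
    have : Real.Gamma ((Fintype.card (Fin 2) : ℝ) / 2 + 1) = 1 := by
      norm_num [Real.Gamma_two]
    rw [this]
    simp only [Fintype.card_fin]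
    rw [← ENNReal.ofReal_pow (Real.sqrt_nonneg s), Real.sq_sqrt hs.le, div_one,
      Real.sq_sqrt pi_nonneg, ← ENNReal.ofReal_mul hs.le, mul_comm]

lemma vol_pi3_slices (T : Set (Fin 3 → ℝ)) (hT : MeasurableSet T) :
    volume T = ∫⁻ t : ℝ, volume {p : Fin 2 → ℝ | Fin.cons t p ∈ T} := by
  have h := (measurePreserving_piFinSuccAbove (fun _ : Fin 3 => (volume : Measure ℝ)) 0).symm
  rw [show (volume : Measure (Fin 3 → ℝ)) = Measure.pi fun _ => volume from rfl,
    ← h.measure_preimage hT.nullMeasurableSet]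
  rw [Measure.prod_apply (by exact (MeasurableEquiv.piFinSuccAbove (fun _ => ℝ) 0).symm.measurable hT)]
  congr 1
  ext t
  congr 1
  ext p
  simp only [Set.mem_preimage, MeasurableEquiv.piFinSuccAbove_symm_apply, mem_setOf_eq,
    Fin.insertNthEquiv, Fin.insertNth_zero, Equiv.coe_fn_mk, Fin.cons_zero, Fin.cons_succ,
    Fin.zero_succAbove, Function.comp_def, cast_eq]

lemma sector_vol (c : ℝ) (hc0 : 0 < c) (hc1 : c ≤ 1) (P : E3) (hP : ‖P‖ = 1) :
    ENNReal.ofReal (2 * π / 3 * (1 - c)) ≤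
      volume {x : E3 | ‖x‖ < 1 ∧ c * ‖x‖ < inner ℝ x P} := by
  classical
  -- orthonormal basis with b 0 = P
  have hcard : Module.finrank ℝ E3 = Fintype.card (Fin 3) := by
    simp [finrank_euclideanSpace]
  have horth : Orthonormal ℝ (({0} : Set (Fin 3)).restrict (fun _ : Fin 3 => P)) := by
    constructor
    · intro i; exact hP
    · intro i j hij
      exact absurd (Subtype.ext ((Set.mem_singleton_iff.mp i.2).trans
        (Set.mem_singleton_iff.mp j.2).symm)) hij
  obtain ⟨b, hb⟩ := horth.exists_orthonormalBasis_extension_of_card_eq hcard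
  have hb0 : b 0 = P := hb 0 rfl
  -- transfer to coordinates
  set S : Set E3 := {y : E3 | ‖y‖ < 1 ∧ c * ‖y‖ < y 0} with hS
  have hcont : ∀ i : Fin 3, Continuous fun y : E3 => y i := fun i =>
    (continuous_apply i).comp (PiLp.continuous_ofLp (p := 2) (β := fun _ : Fin 3 => ℝ))
  have hSmeas : MeasurableSet S :=
    MeasurableSet.inter (measurableSet_lt continuous_norm.measurable measurable_const)
      (measurableSet_lt (continuous_norm.measurable.const_mul c) (hcont 0).measurable)
  have hKS : {x : E3 | ‖x‖ < 1 ∧ c * ‖x‖ < inner ℝ x P} = b.repr ⁻¹' S := by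
    ext x
    simp only [mem_setOf_eq, Set.mem_preimage, hS, b.repr.norm_map]
    rw [b.repr_apply_apply x 0, hb0, real_inner_comm]
  rw [hKS, b.measurePreserving_repr.measure_preimage hSmeas.nullMeasurableSet]
  -- norm-squared in coordinates
  have hn : ∀ y : E3, ‖y‖ ^ 2 = y 0 ^ 2 + y 1 ^ 2 + y 2 ^ 2 := by
    intro y
    rw [EuclideanSpace.norm_eq, Real.sq_sqrt (by positivity), Fin.sum_univ_three]
    simp [sq_abs]
  -- two disjoint pieces inside S
  set A : Set E3 := {y : E3 | 0 < y 0 ∧ y 0 ≤ c ∧ c ^ 2 * (y 0 ^ 2 + y 1 ^ 2 + y 2 ^ 2) < y 0 ^ 2}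
    with hA
  set B : Set E3 := {y : E3 | c < y 0 ∧ y 0 ^ 2 + y 1 ^ 2 + y 2 ^ 2 < 1} with hB
  have hq : ∀ i : Fin 3, Measurable fun y : E3 => y i ^ 2 := fun i =>
    ((hcont i).pow 2).measurable
  have hqs : Measurable fun y : E3 => y 0 ^ 2 + y 1 ^ 2 + y 2 ^ 2 :=
    ((hq 0).add (hq 1)).add (hq 2)
  have hAmeas : MeasurableSet A :=
    MeasurableSet.inter (measurableSet_lt measurable_const (hcont 0).measurable)
      (MeasurableSet.inter (measurableSet_le (hcont 0).measurable measurable_const)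
        (measurableSet_lt (hqs.const_mul _) (hq 0)))
  have hBmeas : MeasurableSet B :=
    MeasurableSet.inter (measurableSet_lt measurable_const (hcont 0).measurable)
      (measurableSet_lt hqs measurable_const)
  have hAS : A ⊆ S := by
    intro y hy
    obtain ⟨h1, h2, h3⟩ := hy
    have hns : ‖y‖ ^ 2 = y 0 ^ 2 + y 1 ^ 2 + y 2 ^ 2 := hn y
    have hcn : c * ‖y‖ < y 0 := by
      have h4 : (c * ‖y‖) ^ 2 < y 0 ^ 2 := by rw [mul_pow, hns]; nlinarith
      exact lt_of_pow_lt_pow_left₀ 2 h1.le h4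
    have h5 : c * ‖y‖ < c * 1 := by rw [mul_one]; linarith
    exact ⟨(mul_lt_mul_iff_right₀ hc0).mp h5, hcn⟩
  have hBS : B ⊆ S := by
    rintro y ⟨h1, h2⟩
    have hns := hn y
    have hy1 : ‖y‖ < 1 := by nlinarith [norm_nonneg y]
    have h5 : c * ‖y‖ < c * 1 := mul_lt_mul_of_pos_left hy1 hc0
    exact ⟨hy1, by rw [mul_one] at h5; linarith⟩
  have hdisj : Disjoint A B := by
    rw [Set.disjoint_left]
    rintro y ⟨_, h2, _⟩ ⟨h4, _⟩
    linarith
  have hABS : volume A + volume B ≤ volume S := by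
    rw [← measure_union hdisj hBmeas]
    exact measure_mono (Set.union_subset hAS hBS)
  refine le_trans ?_ hABS
  -- transfer both pieces to the product space
  set A2 : Set (Fin 3 → ℝ) :=
    {z | 0 < z 0 ∧ z 0 ≤ c ∧ c ^ 2 * (z 0 ^ 2 + z 1 ^ 2 + z 2 ^ 2) < z 0 ^ 2} with hA2
  set B2 : Set (Fin 3 → ℝ) := {z | c < z 0 ∧ z 0 ^ 2 + z 1 ^ 2 + z 2 ^ 2 < 1} with hB2
  have hA2meas : MeasurableSet A2 := by
    refine MeasurableSet.inter (measurableSet_lt measurable_const (measurable_pi_apply 0)) ?_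
    refine MeasurableSet.inter (measurableSet_le (measurable_pi_apply 0) measurable_const) ?_
    exact measurableSet_lt
      (((((measurable_pi_apply 0).pow_const 2).add ((measurable_pi_apply 1).pow_const 2)).add
        ((measurable_pi_apply 2).pow_const 2)).const_mul _) ((measurable_pi_apply 0).pow_const 2)
  have hB2meas : MeasurableSet B2 := by
    refine MeasurableSet.inter (measurableSet_lt measurable_const (measurable_pi_apply 0)) ?_
    exact measurableSet_lt
      ((((measurable_pi_apply 0).pow_const 2).add ((measurable_pi_apply 1).pow_const 2)).add
        ((measurable_pi_apply 2).pow_const 2)) measurable_const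
  have hvA : volume A = volume A2 :=
    (EuclideanSpace.volume_preserving_symm_measurableEquiv_toLp (Fin 3)).measure_preimage
      hA2meas.nullMeasurableSet
  have hvB : volume B = volume B2 :=
    (EuclideanSpace.volume_preserving_symm_measurableEquiv_toLp (Fin 3)).measure_preimage
      hB2meas.nullMeasurableSet
  rw [hvA, hvB, vol_pi3_slices A2 hA2meas, vol_pi3_slices B2 hB2meas]
  -- slices
  have hcons0 : ∀ (t : ℝ) (p : Fin 2 → ℝ), (Fin.cons t p : Fin 3 → ℝ) 0 = t := fun t p => rfl
  have hcons1 : ∀ (t : ℝ) (p : Fin 2 → ℝ), (Fin.cons t p : Fin 3 → ℝ) 1 = p 0 := fun t p => rfl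
  have hcons2 : ∀ (t : ℝ) (p : Fin 2 → ℝ), (Fin.cons t p : Fin 3 → ℝ) 2 = p 1 := fun t p => rfl
  set k : ℝ := (1 - c ^ 2) / c ^ 2 with hk
  have hk0 : 0 ≤ k := div_nonneg (by nlinarith) (by positivity)
  have lbA : ENNReal.ofReal (π * k * (c ^ 3 / 3)) ≤
      ∫⁻ t : ℝ, volume {p : Fin 2 → ℝ | Fin.cons t p ∈ A2} := by
    refine le_trans ?_ (setLIntegral_le_lintegral (Ioc 0 c) _)
    have heq : ∀ t ∈ Ioc (0:ℝ) c, volume {p : Fin 2 → ℝ | Fin.cons t p ∈ A2}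
        = ENNReal.ofReal (π * (k * t ^ 2)) := by
      intro t ht
      rw [← disk_vol (k * t ^ 2)]
      congr 1
      ext p
      simp only [hA2, mem_setOf_eq, hcons0, hcons1, hcons2]
      have h1 : (0:ℝ) < t := ht.1
      have h2 : t ≤ c := ht.2
      have key : c ^ 2 * (t ^ 2 + p 0 ^ 2 + p 1 ^ 2) < t ^ 2 ↔ p 0 ^ 2 + p 1 ^ 2 < k * t ^ 2 := by
        rw [hk, div_mul_eq_mul_div, lt_div_iff₀ (by positivity)]
        constructor <;> intro h <;> nlinarith
      constructor
      · rintro ⟨-, -, h3⟩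
        exact key.mp h3
      · intro h
        exact ⟨h1, h2, key.mpr h⟩
    rw [setLIntegral_congr_fun measurableSet_Ioc heq]
    rw [← ofReal_integral_eq_lintegral_ofReal]
    · apply ENNReal.ofReal_le_ofReal
      rw [← intervalIntegral.integral_of_le hc0.le]
      have : ∀ t : ℝ, π * (k * t ^ 2) = (π * k) * t ^ 2 := fun t => by ring
      simp_rw [this]
      rw [intervalIntegral.integral_const_mul, integral_pow]
      norm_num [mul_div_assoc]
    · exact (continuous_const.mul ((continuous_const.mul (continuous_pow 2)))).integrableOn_Ioc
    · filter_upwards with t using by positivity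
  have lbB : ENNReal.ofReal (π * (2 / 3 - c + c ^ 3 / 3)) ≤
      ∫⁻ t : ℝ, volume {p : Fin 2 → ℝ | Fin.cons t p ∈ B2} := by
    refine le_trans ?_ (setLIntegral_le_lintegral (Ioc c 1) _)
    have heq : ∀ t ∈ Ioc c (1:ℝ), volume {p : Fin 2 → ℝ | Fin.cons t p ∈ B2}
        = ENNReal.ofReal (π * (1 - t ^ 2)) := by
      intro t ht
      rw [← disk_vol (1 - t ^ 2)]
      congr 1
      ext p
      simp only [hB2, mem_setOf_eq, hcons0, hcons1, hcons2]
      constructor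
      · rintro ⟨-, h3⟩; linarith
      · intro h; exact ⟨ht.1, by linarith⟩
    rw [setLIntegral_congr_fun measurableSet_Ioc heq]
    rw [← ofReal_integral_eq_lintegral_ofReal]
    · apply ENNReal.ofReal_le_ofReal
      rw [← intervalIntegral.integral_of_le hc1]
      have : ∀ t : ℝ, π * (1 - t ^ 2) = π - π * t ^ 2 := fun t => by ring
      simp_rw [this]
      rw [intervalIntegral.integral_sub (g := fun x : ℝ => π * x ^ 2) intervalIntegrable_const
        ((continuous_const.mul (continuous_pow 2)).intervalIntegrable c 1 :
          IntervalIntegrable (fun x : ℝ => π * x ^ 2) volume c 1),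
        intervalIntegral.integral_const, intervalIntegral.integral_const_mul, integral_pow]
      apply le_of_eq
      simp only [smul_eq_mul]
      ring
    · exact (continuous_const.mul (continuous_const.sub (continuous_pow 2))).integrableOn_Ioc
    · refine (ae_restrict_iff' measurableSet_Ioc).mpr
        (Filter.Eventually.of_forall fun t ht => ?_)
      have h1 : (0:ℝ) ≤ 1 - t ^ 2 := by
        nlinarith [ht.1, ht.2, hc0, mul_nonneg (le_of_lt (lt_trans hc0 ht.1)) (sub_nonneg.mpr ht.2)]
      simpa using mul_nonneg pi_pos.le h1
  refine le_trans (le_of_eq ?_) (add_le_add lbA lbB)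
  rw [← ENNReal.ofReal_add (by positivity)
    (by nlinarith [pi_pos, mul_nonneg (sq_nonneg (1 - c)) (by linarith : (0:ℝ) ≤ 2 + c)])]
  congr 1
  have hc2 : c ^ 2 ≠ 0 := by positivity
  rw [hk]
  field_simp [hk]
  ring

end Aux

open MeasureTheory Real Set in
/-- If `P₁, …, P_N` are points on the unit sphere in `ℝ³` and `d_j` is at most the distance
from `P_j` to every other point, then `∑ d_j² ≤ 16`. -/
theorem sum_nearest_neighbour_sq (N : ℕ) (hN : 2 ≤ N)
    (P : Fin N → EuclideanSpace ℝ (Fin 3)) (hP : ∀ j, ‖P j‖ = 1)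
    (d : Fin N → ℝ) (hd0 : ∀ j, 0 ≤ d j)
    (hd : ∀ i j, i ≠ j → d j ≤ dist (P i) (P j)) :
    ∑ j, (d j) ^ 2 ≤ 16 := by
  have hpi := Real.pi_pos
  have hnt : Nontrivial (Fin N) :=
    ⟨⟨⟨0, by omega⟩, ⟨1, by omega⟩, by
      intro h; have := congrArg Fin.val h; simp at this⟩⟩
  have hd2 : ∀ j, d j ≤ 2 := by
    intro j
    obtain ⟨i, hij⟩ := exists_ne j
    calc d j ≤ dist (P i) (P j) := hd i j hij
    _ ≤ ‖P i‖ + ‖P j‖ := by rw [dist_eq_norm]; exact norm_sub_le _ _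
    _ = 2 := by rw [hP i, hP j]; norm_num
  set c : Fin N → ℝ := fun j => 1 - d j ^ 2 / 8 with hc
  have hc0 : ∀ j, 0 < c j := fun j => by
    have h1 := hd2 j; have h2 := hd0 j; simp only [hc]; nlinarith
  have hc1 : ∀ j, c j ≤ 1 := fun j => by
    simp only [hc]; nlinarith [sq_nonneg (d j)]
  set K : Fin N → Set E3 := fun j =>
    {x : E3 | ‖x‖ < 1 ∧ c j * ‖x‖ < inner ℝ x (P j)} with hK
  have hKmeas : ∀ j, MeasurableSet (K j) := by
    intro j
    refine (IsOpen.inter ?_ ?_).measurableSet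
    · exact isOpen_lt continuous_norm continuous_const
    · exact isOpen_lt (continuous_const.mul continuous_norm) (continuous_id.inner continuous_const)
  have hdisj : Pairwise (Function.onFun Disjoint K) := by
    intro i j hij
    rw [Function.onFun, Set.disjoint_left]
    rintro x ⟨h1, h2⟩ ⟨h3, h4⟩
    have hx0 : x ≠ 0 := by
      rintro rfl
      simp only [norm_zero, mul_zero, inner_zero_left] at h2
      exact lt_irrefl 0 h2
    have hnx : 0 < ‖x‖ := norm_pos_iff.mpr hx0
    set y : E3 := (‖x‖⁻¹ : ℝ) • x with hy
    have hny : ‖y‖ = 1 := norm_smul_inv_norm hx0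
    have key : ∀ jj : Fin N, c jj * ‖x‖ < inner ℝ x (P jj) → ‖y - P jj‖ < d jj / 2 := by
      intro jj hlt
      have hip : (c jj : ℝ) < inner ℝ y (P jj) := by
        calc c jj = ‖x‖⁻¹ * (c jj * ‖x‖) := by field_simp
        _ < ‖x‖⁻¹ * inner ℝ x (P jj) := by
            exact mul_lt_mul_of_pos_left hlt (inv_pos.mpr hnx)
        _ = inner ℝ y (P jj) := (real_inner_smul_left x (P jj) ‖x‖⁻¹).symm
      have hsq : ‖y - P jj‖ ^ 2 < (d jj / 2) ^ 2 := by
        rw [norm_sub_sq_real, hny, hP jj]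
        simp only [hc] at hip
        nlinarith
      exact lt_of_pow_lt_pow_left₀ 2 (by have := hd0 jj; linarith) hsq
    have hi' := key i h2
    have hj' := key j h4
    have htri : dist (P i) (P j) ≤ ‖y - P i‖ + ‖y - P j‖ := by
      rw [dist_eq_norm]
      calc ‖P i - P j‖ = ‖(y - P j) - (y - P i)‖ := by congr 1; abel
      _ ≤ ‖y - P j‖ + ‖y - P i‖ := norm_sub_le _ _
      _ = ‖y - P i‖ + ‖y - P j‖ := by ring
    have hdi := hd j i hij.symm
    have hdj := hd i j hij
    rw [dist_comm] at hdi
    linarith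
  have hsub : ∀ j, K j ⊆ Metric.ball (0 : E3) 1 := fun j x hx => by
    simpa [mem_ball_zero_iff] using hx.1
  have hvol : ∑ j, volume (K j) ≤ volume (Metric.ball (0 : E3) 1) := by
    have h := measure_iUnion (μ := volume) hdisj hKmeas
    rw [tsum_fintype] at h
    rw [← h]
    exact measure_mono (Set.iUnion_subset hsub)
  have hball : volume (Metric.ball (0 : E3) 1) = ENNReal.ofReal (4 * π / 3) := by
    rw [EuclideanSpace.volume_ball]
    simp only [Fintype.card_fin]
    have h52 : Real.Gamma ((3:ℝ)/2 + 1) = 3/4 * √π := by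
      rw [Real.Gamma_add_one (by norm_num), show (3:ℝ)/2 = 1/2 + 1 by norm_num,
        Real.Gamma_add_one (by norm_num), Real.Gamma_one_half_eq]
      ring
    have hsp : (0:ℝ) < √π := Real.sqrt_pos.mpr hpi
    have hval : √π ^ 3 / Real.Gamma (5/2 : ℝ) = 4 * π / 3 := by
      rw [show (5:ℝ)/2 = 3/2 + 1 by norm_num, h52]
      have h2 : √π ^ 2 = π := Real.sq_sqrt hpi.le
      field_simp
      nlinarith [h2, hsp]
    norm_num
    rw [hval]
  have hsec : ∀ j, ENNReal.ofReal (π / 12 * d j ^ 2) ≤ volume (K j) := by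
    intro j
    have h := sector_vol (c j) (hc0 j) (hc1 j) (P j) (hP j)
    have : π / 12 * d j ^ 2 = 2 * π / 3 * (1 - c j) := by simp only [hc]; ring
    rw [this]
    exact h
  have total : ENNReal.ofReal (∑ j, π / 12 * d j ^ 2) ≤ ENNReal.ofReal (4 * π / 3) := by
    rw [ENNReal.ofReal_sum_of_nonneg (fun j _ => by positivity)]
    exact le_trans (Finset.sum_le_sum fun j _ => hsec j) (le_trans hvol hball.le)
  rw [ENNReal.ofReal_le_ofReal_iff (by positivity)] at total
  rw [← Finset.mul_sum] at total
  nlinarith [total, hpi]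
end

section
/- Let m, x₃ be integers with 0 < x₃ < m, suppose m - x₃ < every prime factor of m that is ≡ 3 (mod 4), and suppose (m - x₃)(m + x₃) = x₁² + x₂² is a sum of two squares. Then m + x₃ is a sum of two squares. -/
/-- If `0 < x₃ < m`, every prime factor `p ≡ 3 (mod 4)` of `m` exceeds `m - x₃`, and
`(m - x₃)(m + x₃)` is a sum of two squares, then `m + x₃` is a sum of two squares. -/
theorem shifted_sum_of_two_squares (m x₃ : ℤ) (h0 : 0 < x₃) (hm : x₃ < m)
    (hprimes : ∀ p : ℕ, p.Prime → p % 4 = 3 → (p : ℤ) ∣ m → m - x₃ < p)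
    (hsq : ∃ x₁ x₂ : ℤ, (m - x₃) * (m + x₃) = x₁ ^ 2 + x₂ ^ 2) :
    ∃ a b : ℤ, m + x₃ = a ^ 2 + b ^ 2 := by
  obtain ⟨x₁, x₂, hx⟩ := hsq
  set A : ℕ := (m - x₃).toNat with hA
  set B : ℕ := (m + x₃).toNat with hB
  have hApos : 0 < m - x₃ := by linarith
  have hBpos : 0 < m + x₃ := by linarith
  have hAcast : (A : ℤ) = m - x₃ := Int.toNat_of_nonneg hApos.le
  have hBcast : (B : ℤ) = m + x₃ := Int.toNat_of_nonneg hBpos.le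
  have hAne : A ≠ 0 := by
    intro h; rw [h] at hAcast; simp at hAcast; linarith
  have hBne : B ≠ 0 := by
    intro h; rw [h] at hBcast; simp at hBcast; linarith
  have hABsq : ∃ x y : ℕ, A * B = x ^ 2 + y ^ 2 := by
    refine ⟨x₁.natAbs, x₂.natAbs, ?_⟩
    have : ((A * B : ℕ) : ℤ) = ((x₁.natAbs ^ 2 + x₂.natAbs ^ 2 : ℕ) : ℤ) := by
      push_cast
      rw [hAcast, hBcast, hx, sq_abs, sq_abs]
    exact_mod_cast this
  have hABeven : ∀ q : ℕ, q.Prime → q % 4 = 3 → Even (padicValNat q (A * B)) := by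
    intro q hq hq3
    by_cases hd : q ∣ A * B
    · exact Nat.eq_sq_add_sq_iff.mp hABsq q (Nat.mem_primeFactors.mpr ⟨hq, hd, mul_ne_zero hAne hBne⟩) hq3
    · rw [padicValNat.eq_zero_of_not_dvd hd]; exact Even.zero
  have hBeven : ∀ q : ℕ, q.Prime → q % 4 = 3 → Even (padicValNat q B) := by
    intro q hq hq3
    by_contra hodd
    have hfq : Fact q.Prime := ⟨hq⟩
    have hmul : padicValNat q (A * B) = padicValNat q A + padicValNat q B :=
      padicValNat.mul hAne hBne
    have hAodd : ¬ Even (padicValNat q A) := by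
      have := hABeven q hq hq3
      rw [hmul, Nat.even_add] at this
      tauto
    have hqA : q ∣ A := by
      by_contra h
      exact hAodd (padicValNat.eq_zero_of_not_dvd h ▸ Even.zero)
    have hqB : q ∣ B := by
      by_contra h
      exact hodd (padicValNat.eq_zero_of_not_dvd h ▸ Even.zero)
    have hqA' : (q : ℤ) ∣ m - x₃ := hAcast ▸ Int.natCast_dvd_natCast.mpr hqA
    have hqB' : (q : ℤ) ∣ m + x₃ := hBcast ▸ Int.natCast_dvd_natCast.mpr hqB
    have hq2m : (q : ℤ) ∣ 2 * m := by
      have h := dvd_add hqA' hqB'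
      have e : (m - x₃) + (m + x₃) = 2 * m := by ring
      rwa [e] at h
    have hqodd : ¬ (q : ℤ) ∣ 2 := by
      intro h
      have h2 : q ∣ 2 := by exact_mod_cast h
      have := (Nat.le_of_dvd (by norm_num) h2)
      omega
    have hqm : (q : ℤ) ∣ m := by
      rcases (Int.Prime.dvd_mul' hq hq2m) with h | h
      · exact absurd h hqodd
      · exact h
    have hlt : m - x₃ < q := hprimes q hq hq3 hqm
    have hle : (q : ℤ) ≤ m - x₃ := Int.le_of_dvd hApos hqA'
    linarith
  have := Nat.eq_sq_add_sq_iff.mpr (fun q hq hq3 => hBeven q (Nat.prime_of_mem_primeFactors hq) hq3)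
  obtain ⟨x, y, hxy⟩ := this
  exact ⟨x, y, by rw [← hBcast]; exact_mod_cast hxy⟩
end

section
/- Let f: ℝ/ℤ → ℝ (or f on [0,1]) be of bounded variation with total variation V(f), and let x₁,…,x_N ∈ [0,1] have discrepancy D_N = sup over intervals I ⊂ [0,1] of |#{n ≤ N : x_n ∈ I}/N − length(I)|. Then |(1/N)∑_{n≤N} f(x_n) − ∫₀¹ f(x)dx| ≤ V(f)·D_N. -/
open Finset

private lemma evar_partition_sum (f : ℝ → ℝ) (T : ℕ → ℝ) (hT : Monotone T) (n : ℕ) :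
    ∑ i ∈ Finset.range n, eVariationOn f (Set.Icc (T i) (T (i+1)))
      ≤ eVariationOn f (Set.Icc (T 0) (T n)) := by
  induction n with
  | zero => simp
  | succ n ih =>
    rw [Finset.sum_range_succ]
    have h := eVariationOn.Icc_add_Icc f (s := Set.univ) (hT (Nat.zero_le n))
      (hT (Nat.le_succ n)) (Set.mem_univ (T n))
    simp only [Set.univ_inter] at h
    calc ∑ i ∈ Finset.range n, eVariationOn f (Set.Icc (T i) (T (i+1)))
          + eVariationOn f (Set.Icc (T n) (T (n+1)))
        ≤ eVariationOn f (Set.Icc (T 0) (T n)) + eVariationOn f (Set.Icc (T n) (T (n+1))) :=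
          add_le_add_left ih _
      _ = _ := h


section Aux
variable (f : ℝ → ℝ) (V : ℝ)

lemma koksma_aux (hV0 : 0 ≤ V)
    (hBV : eVariationOn f (Set.Icc 0 1) ≤ ENNReal.ofReal V)
    (N : ℕ) (hN : 0 < N) (x : Fin N → ℝ) (hx : ∀ n, x n ∈ Set.Icc (0 : ℝ) 1)
    (D : ℝ)
    (hD : ∀ a b : ℝ, 0 ≤ a → a ≤ b → b ≤ 1 →
      |((Finset.univ.filter fun n => x n ∈ Set.Icc a b).card : ℝ) / N - (b - a)| ≤ D)
    (J : ℕ) (hJ : 0 < J) :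
    |(1 / N : ℝ) * ∑ n, f (x n) - ∫ t in (0 : ℝ)..1, f t| ≤ V * D + V / J := by
  classical
  set s : Finset ℝ :=
    (Finset.image x Finset.univ) ∪ (Finset.image (fun j : ℕ => (j : ℝ) / J) (Finset.range (J+1)))
    with hs_def
  have hxs : ∀ n, x n ∈ s := by
    intro n
    exact Finset.mem_union_left _ (Finset.mem_image_of_mem x (Finset.mem_univ n))
  have hgrid : ∀ j : ℕ, j ≤ J → ((j : ℝ) / J) ∈ s := by
    intro j hj
    exact Finset.mem_union_right _
      (Finset.mem_image_of_mem _ (Finset.mem_range.2 (by omega)))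
  have h0s : (0 : ℝ) ∈ s := by simpa using hgrid 0 (Nat.zero_le J)
  have h1s : (1 : ℝ) ∈ s := by
    have := hgrid J le_rfl
    rwa [div_self (by positivity : (J : ℝ) ≠ 0)] at this
  have hs01 : ∀ y ∈ s, y ∈ Set.Icc (0 : ℝ) 1 := by
    intro y hy
    rcases Finset.mem_union.1 hy with h | h
    · rcases Finset.mem_image.1 h with ⟨n, -, rfl⟩
      exact hx n
    · rcases Finset.mem_image.1 h with ⟨j, hj, rfl⟩
      have hj' : j ≤ J := by simpa [Nat.lt_succ_iff] using hj
      constructor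
      · positivity
      · rw [div_le_one (by positivity)]
        exact_mod_cast hj'
  obtain ⟨K, hK⟩ : ∃ K, s.card = K + 1 := by
    have : s.Nonempty := ⟨0, h0s⟩
    have := Finset.card_pos.2 this
    exact ⟨s.card - 1, by omega⟩
  set u : Fin (K+1) ↪o ℝ := s.orderEmbOfFin hK with hu_def
  set T : ℕ → ℝ := fun i => u ⟨min i K, by omega⟩ with hT_def
  have hTs : ∀ i, T i ∈ s := fun i => Finset.orderEmbOfFin_mem s hK _
  have hT01 : ∀ i, T i ∈ Set.Icc (0 : ℝ) 1 := fun i => hs01 _ (hTs i)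
  have hTmono : Monotone T := by
    intro a b hab
    exact u.monotone (by simp only [Fin.mk_le_mk]; omega)
  have hmem_ex : ∀ y ∈ s, ∃ j : Fin (K+1), u j = y := by
    intro y hy
    have : y ∈ Set.range u := by
      rw [Finset.range_orderEmbOfFin]
      exact_mod_cast hy
    exact this
  have hT0 : T 0 = 0 := by
    have h1 : T 0 ≤ 0 := by
      obtain ⟨j, hj⟩ := hmem_ex 0 h0s
      have hjK := j.isLt
      calc T 0 ≤ u j := u.monotone (by simp only [Fin.le_def, Fin.val_mk]; omega)
        _ = 0 := hj
    exact le_antisymm h1 (hs01 _ (hTs 0)).1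
  have hTK : ∀ i, K ≤ i → T i = 1 := by
    intro i hi
    have h1 : (1:ℝ) ≤ T i := by
      obtain ⟨j, hj⟩ := hmem_ex 1 h1s
      calc (1:ℝ) = u j := hj.symm
        _ ≤ T i := u.monotone (by simp only [Fin.le_def, Fin.val_mk]; have hjK := j.isLt; omega)
    exact le_antisymm (hs01 _ (hTs i)).2 h1
  have hTlt : ∀ i, i < K → T i < T (i+1) := by
    intro i hi
    exact u.strictMono (by simp only [Fin.mk_lt_mk]; omega)
  have hgap : ∀ i, i < K → ∀ y ∈ s, y ≤ T i ∨ T (i+1) ≤ y := by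
    intro i hi y hy
    obtain ⟨j, rfl⟩ := hmem_ex y hy
    have hjK := j.isLt
    rcases le_or_gt (j : ℕ) i with h | h
    · left
      exact u.monotone (by simp only [Fin.le_def, Fin.val_mk]; omega)
    · right
      exact u.monotone (by simp only [Fin.le_def, Fin.val_mk]; omega)
  have hmesh : ∀ i, i < K → T (i+1) - T i ≤ 1 / J := by
    intro i hi
    by_contra hcon
    push_neg at hcon
    have hTi0 : 0 ≤ T i := (hT01 i).1
    have hTi1 : T i < 1 := lt_of_lt_of_le (hTlt i hi) (hT01 (i+1)).2
    set j : ℕ := Nat.floor ((J : ℝ) * T i) + 1 with hj_def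
    have hJ0 : (0:ℝ) < J := by positivity
    have hfl : (Nat.floor ((J : ℝ) * T i) : ℝ) ≤ (J : ℝ) * T i :=
      Nat.floor_le (by positivity)
    have hfl2 : (J : ℝ) * T i < (j : ℝ) := by
      have := Nat.lt_floor_add_one ((J : ℝ) * T i)
      push_cast [hj_def]
      push_cast at this
      linarith
    have hjJ : j ≤ J := by
      have : (j : ℝ) ≤ (J:ℝ) * T i + 1 := by push_cast [hj_def]; linarith
      have : (j : ℝ) < (J:ℝ) + 1 := by nlinarith
      exact_mod_cast Nat.lt_succ_iff.1 (by exact_mod_cast this)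
    have hlow : T i < (j : ℝ) / J := by
      rw [lt_div_iff₀ hJ0]
      linarith [hfl2]
    have hhigh : (j : ℝ) / J < T (i+1) := by
      rw [div_lt_iff₀ hJ0]
      have h1 : (j : ℝ) ≤ (J:ℝ) * T i + 1 := by push_cast [hj_def]; linarith
      have h2 : 1 < (T (i+1) - T i) * J := (div_lt_iff₀ hJ0).1 hcon
      nlinarith
    rcases hgap i hi _ (hgrid j hjJ) with h | h
    · linarith
    · linarith
  set c : ℝ → ℝ := fun v => ((Finset.univ.filter fun m => x m ∈ Set.Icc (0:ℝ) v).card : ℝ) / N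
    with hc_def
  have hNR : (0:ℝ) < N := by exact_mod_cast hN
  have hc : ∀ v : ℝ, 0 ≤ v → v ≤ 1 → |c v - v| ≤ D := by
    intro v h0 h1
    have h := hD 0 v le_rfl h0 h1
    rw [sub_zero] at h
    simpa only [hc_def] using h
  have hsplit : ∀ i, i < K →
      (Finset.univ.filter fun m => x m ∈ Set.Icc (0:ℝ) (T (i+1))).card
        = (Finset.univ.filter fun m => x m ∈ Set.Icc (0:ℝ) (T i)).card
          + (Finset.univ.filter fun m => x m = T (i+1)).card := by
    intro i hi
    have hset : (Finset.univ.filter fun m => x m ∈ Set.Icc (0:ℝ) (T (i+1)))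
        = (Finset.univ.filter fun m => x m ∈ Set.Icc (0:ℝ) (T i))
          ∪ (Finset.univ.filter fun m => x m = T (i+1)) := by
      ext m
      simp only [Finset.mem_union, Finset.mem_filter, Finset.mem_univ, true_and, Set.mem_Icc]
      constructor
      · rintro ⟨h0, h1⟩
        rcases hgap i hi (x m) (hxs m) with h | h
        · exact Or.inl ⟨h0, h⟩
        · exact Or.inr (le_antisymm h1 h)
      · rintro (⟨h0, h1⟩ | h)
        · exact ⟨h0, h1.trans (hTmono (Nat.le_succ i))⟩
        · exact ⟨h ▸ (hT01 (i+1)).1, le_of_eq h⟩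
    have hdis : Disjoint (Finset.univ.filter fun m => x m ∈ Set.Icc (0:ℝ) (T i))
        (Finset.univ.filter fun m => x m = T (i+1)) := by
      rw [Finset.disjoint_left]
      intro m hm1 hm2
      simp only [Finset.mem_filter, Finset.mem_univ, true_and, Set.mem_Icc] at hm1 hm2
      have hlt := hTlt i hi
      rw [hm2] at hm1
      linarith [hm1.2]
    rw [hset, Finset.card_union_of_disjoint hdis]
  have hc0 : c (T 0) = ((Finset.univ.filter fun m => x m = T 0).card : ℝ) / N := by
    have hfe : (Finset.univ.filter fun m => x m ∈ Set.Icc (0:ℝ) (T 0))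
        = Finset.univ.filter fun m => x m = T 0 := by
      ext m
      simp only [Finset.mem_filter, Finset.mem_univ, true_and, Set.mem_Icc, hT0]
      constructor
      · rintro ⟨h0, h1⟩
        exact le_antisymm h1 h0
      · rintro h
        exact ⟨le_of_eq h.symm, le_of_eq h⟩
    simp only [hc_def, hfe]
  have hcK : c (T K) = 1 := by
    have hfe : (Finset.univ.filter fun m => x m ∈ Set.Icc (0:ℝ) (T K)) = Finset.univ := by
      apply Finset.filter_true_of_mem
      intro m _
      rw [hTK K le_rfl]
      exact hx m
    simp only [hc_def, hfe, Finset.card_univ, Fintype.card_fin]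
    field_simp
  set e : Fin (K+1) ≃o {y // y ∈ s} := s.orderIsoOfFin hK with he_def
  set idx : Fin N → ℕ := fun m => ((e.symm ⟨x m, hxs m⟩ : Fin (K+1)) : ℕ) with hidx_def
  have hidxK : ∀ m, idx m ≤ K := fun m => Nat.lt_succ_iff.1 (e.symm ⟨x m, hxs m⟩).isLt
  have hidxT : ∀ m, T (idx m) = x m := by
    intro m
    have h1 : (⟨min (idx m) K, by omega⟩ : Fin (K+1)) = e.symm ⟨x m, hxs m⟩ := by
      apply Fin.ext
      simp only [Fin.val_mk]
      exact min_eq_left (hidxK m)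
    have h2 : T (idx m) = u (e.symm ⟨x m, hxs m⟩) := by
      show u _ = u _
      rw [h1]
    rw [h2]
    have h3 : u (e.symm ⟨x m, hxs m⟩) = ((e (e.symm ⟨x m, hxs m⟩)) : ℝ) :=
      (Finset.coe_orderIsoOfFin_apply s hK _).symm
    rw [h3, OrderIso.apply_symm_apply]
  have hTinj : ∀ j j' : ℕ, j ≤ K → j' ≤ K → T j = T j' → j = j' := by
    intro j j' hjK hj'K h
    have h2 := u.injective h
    have h3 : min j K = min j' K := congrArg Fin.val h2
    omega
  have hsumf : ∑ m, f (x m)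
      = ∑ j ∈ Finset.range (K+1),
          ((Finset.univ.filter fun m => x m = T j).card : ℝ) * f (T j) := by
    rw [← Finset.sum_fiberwise_of_maps_to (g := idx) (t := Finset.range (K+1))
        (fun m _ => Finset.mem_range.2 (Nat.lt_succ_iff.2 (hidxK m))) (fun m => f (x m))]
    apply Finset.sum_congr rfl
    intro j hj
    have hjK : j ≤ K := Nat.lt_succ_iff.1 (Finset.mem_range.1 hj)
    have hfe : (Finset.univ.filter fun m => idx m = j)
        = Finset.univ.filter fun m => x m = T j := by
      ext m
      simp only [Finset.mem_filter, Finset.mem_univ, true_and]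
      constructor
      · rintro rfl
        exact (hidxT m).symm
      · intro h
        exact hTinj (idx m) j (hidxK m) hjK (by rw [hidxT m, h])
    calc ∑ m ∈ Finset.univ.filter (fun m => idx m = j), f (x m)
        = ∑ m ∈ Finset.univ.filter (fun m => idx m = j), f (T j) := by
          apply Finset.sum_congr rfl
          intro m hm
          have hmj : idx m = j := (Finset.mem_filter.1 hm).2
          rw [← hmj, hidxT m]
      _ = _ := by rw [Finset.sum_const, hfe, nsmul_eq_mul]
  set S : ℝ := ∑ i ∈ Finset.range K, (c (T i) - T i) * (f (T (i+1)) - f (T i)) with hS_def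
  set R : ℝ := ∑ i ∈ Finset.range K, (T (i+1) - T i) * f (T (i+1)) with hR_def
  have hcc : ∀ i, i < K → c (T (i+1)) - c (T i)
      = ((Finset.univ.filter fun m => x m = T (i+1)).card : ℝ) / N := by
    intro i hi
    simp only [hc_def]
    rw [hsplit i hi]
    push_cast
    ring
  have hkey : S = R - (1 / N : ℝ) * ∑ m, f (x m) := by
    have e1 : ∀ i ∈ Finset.range K,
        (c (T i) - T i) * (f (T (i+1)) - f (T i))
        = ((c (T (i+1)) * f (T (i+1)) - c (T i) * f (T i))
            - (T (i+1) * f (T (i+1)) - T i * f (T i)))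
          + ((T (i+1) - T i) * f (T (i+1))
            - (c (T (i+1)) - c (T i)) * f (T (i+1))) := by
      intro i _
      ring
    have e2 : ∑ i ∈ Finset.range K, (c (T (i+1)) - c (T i)) * f (T (i+1))
        = ∑ i ∈ Finset.range K,
            (((Finset.univ.filter fun m => x m = T (i+1)).card : ℝ) / N) * f (T (i+1)) := by
      apply Finset.sum_congr rfl
      intro i hi
      rw [hcc i (Finset.mem_range.1 hi)]
    have e3 : ∑ j ∈ Finset.range (K+1),
          ((((Finset.univ.filter fun m => x m = T j).card : ℝ)) / N) * f (T j)
        = ∑ i ∈ Finset.range K,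
            (((Finset.univ.filter fun m => x m = T (i+1)).card : ℝ) / N) * f (T (i+1))
          + (((Finset.univ.filter fun m => x m = T 0).card : ℝ) / N) * f (T 0) :=
      Finset.sum_range_succ' _ K
    have e5 : (1 / N : ℝ) * ∑ m, f (x m)
        = ∑ j ∈ Finset.range (K+1),
            ((((Finset.univ.filter fun m => x m = T j).card : ℝ)) / N) * f (T j) := by
      rw [hsumf, Finset.mul_sum]
      apply Finset.sum_congr rfl
      intro j _
      ring
    have tA : ∑ i ∈ Finset.range K, (c (T (i+1)) * f (T (i+1)) - c (T i) * f (T i))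
        = c (T K) * f (T K) - c (T 0) * f (T 0) :=
      Finset.sum_range_sub (fun i => c (T i) * f (T i)) K
    have tB : ∑ i ∈ Finset.range K, (T (i+1) * f (T (i+1)) - T i * f (T i))
        = T K * f (T K) - T 0 * f (T 0) :=
      Finset.sum_range_sub (fun i => T i * f (T i)) K
    have tC : ∑ i ∈ Finset.range K, (c (T (i+1)) - c (T i)) * f (T (i+1))
        = (1 / N : ℝ) * ∑ m, f (x m) - c (T 0) * f (T 0) := by
      rw [e2, e5, e3, hc0]
      ring
    calc S = ∑ i ∈ Finset.range K,
          (((c (T (i+1)) * f (T (i+1)) - c (T i) * f (T i))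
            - (T (i+1) * f (T (i+1)) - T i * f (T i)))
          + ((T (i+1) - T i) * f (T (i+1))
            - (c (T (i+1)) - c (T i)) * f (T (i+1)))) := by
          rw [hS_def]
          exact Finset.sum_congr rfl e1
      _ = ((∑ i ∈ Finset.range K, (c (T (i+1)) * f (T (i+1)) - c (T i) * f (T i)))
            - (∑ i ∈ Finset.range K, (T (i+1) * f (T (i+1)) - T i * f (T i))))
          + ((∑ i ∈ Finset.range K, (T (i+1) - T i) * f (T (i+1)))
            - (∑ i ∈ Finset.range K, (c (T (i+1)) - c (T i)) * f (T (i+1)))) := by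
          rw [Finset.sum_add_distrib]
          congr 1
          · exact Finset.sum_sub_distrib _ _
          · exact Finset.sum_sub_distrib _ _
      _ = ((c (T K) * f (T K) - c (T 0) * f (T 0)) - (T K * f (T K) - T 0 * f (T 0)))
          + (R - ((1 / N : ℝ) * ∑ m, f (x m) - c (T 0) * f (T 0))) := by
          rw [tA, tB, tC, ← hR_def]
      _ = R - (1 / N : ℝ) * ∑ m, f (x m) := by
          rw [hcK, hT0, hTK K le_rfl]
          ring
  have hDnn : 0 ≤ D := by
    have h := hc 0 le_rfl zero_le_one
    calc (0:ℝ) ≤ |c 0 - 0| := abs_nonneg _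
      _ ≤ D := h
  have hvar_sum : ∑ i ∈ Finset.range K, |f (T (i+1)) - f (T i)| ≤ V := by
    have h1 := eVariationOn.sum_le (f := f) (n := K) hTmono (fun i => hT01 i)
    have h2 : ∑ i ∈ Finset.range K, edist (f (T (i+1))) (f (T i))
        = ENNReal.ofReal (∑ i ∈ Finset.range K, |f (T (i+1)) - f (T i)|) := by
      rw [ENNReal.ofReal_sum_of_nonneg (fun i _ => abs_nonneg _)]
      apply Finset.sum_congr rfl
      intro i _
      rw [edist_dist, Real.dist_eq]
    rw [h2] at h1
    exact (ENNReal.ofReal_le_ofReal_iff hV0).1 (h1.trans hBV)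
  have hSbound : |S| ≤ D * V := by
    calc |S| ≤ ∑ i ∈ Finset.range K, |(c (T i) - T i) * (f (T (i+1)) - f (T i))| := by
          rw [hS_def]
          exact Finset.abs_sum_le_sum_abs _ _
      _ ≤ ∑ i ∈ Finset.range K, D * |f (T (i+1)) - f (T i)| := by
          apply Finset.sum_le_sum
          intro i _
          rw [abs_mul]
          exact mul_le_mul_of_nonneg_right (hc (T i) (hT01 i).1 (hT01 i).2) (abs_nonneg _)
      _ = D * ∑ i ∈ Finset.range K, |f (T (i+1)) - f (T i)| := (Finset.mul_sum _ _ _).symm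
      _ ≤ D * V := mul_le_mul_of_nonneg_left hvar_sum hDnn
  have hBVfin : BoundedVariationOn f (Set.Icc 0 1) := (hBV.trans_lt ENNReal.ofReal_lt_top).ne
  obtain ⟨p, q, hp, hq, hpq⟩ := hBVfin.locallyBoundedVariationOn.exists_monotoneOn_sub_monotoneOn
  have hint : ∀ a b : ℝ, a ∈ Set.Icc (0:ℝ) 1 → b ∈ Set.Icc (0:ℝ) 1 → a ≤ b →
      IntervalIntegrable f MeasureTheory.volume a b := by
    intro a b ha hb hab
    have hsub : Set.uIcc a b ⊆ Set.Icc (0:ℝ) 1 := by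
      rw [Set.uIcc_of_le hab]
      exact Set.Icc_subset_Icc ha.1 hb.2
    have h1 : IntervalIntegrable p MeasureTheory.volume a b :=
      (hp.mono hsub).intervalIntegrable
    have h2 : IntervalIntegrable q MeasureTheory.volume a b :=
      (hq.mono hsub).intervalIntegrable
    rw [hpq]
    exact h1.sub h2
  have hintT : ∀ i, i < K → IntervalIntegrable f MeasureTheory.volume (T i) (T (i+1)) :=
    fun i _ => hint _ _ (hT01 i) (hT01 (i+1)) (hTmono (Nat.le_succ i))
  have hintegral : ∫ t in (0:ℝ)..1, f t = ∑ i ∈ Finset.range K, ∫ t in (T i)..(T (i+1)), f t := by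
    rw [intervalIntegral.sum_integral_adjacent_intervals (fun i hi => hintT i hi), hT0,
      hTK K le_rfl]
  have hVi_ne : ∀ i : ℕ, eVariationOn f (Set.Icc (T i) (T (i+1))) ≠ ⊤ := by
    intro i
    have hsub : Set.Icc (T i) (T (i+1)) ⊆ Set.Icc (0:ℝ) 1 :=
      Set.Icc_subset_Icc (hT01 i).1 (hT01 (i+1)).2
    exact hBVfin.mono hsub
  set W : ℕ → ℝ := fun i => (eVariationOn f (Set.Icc (T i) (T (i+1)))).toReal with hW_def
  have hWnn : ∀ i, 0 ≤ W i := fun i => ENNReal.toReal_nonneg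
  have hterm : ∀ i, i < K →
      |(T (i+1) - T i) * f (T (i+1)) - ∫ t in (T i)..(T (i+1)), f t| ≤ W i * (1 / J) := by
    intro i hi
    have hab : T i ≤ T (i+1) := hTmono (Nat.le_succ i)
    have heq : (T (i+1) - T i) * f (T (i+1)) - ∫ t in (T i)..(T (i+1)), f t
        = ∫ t in (T i)..(T (i+1)), (f (T (i+1)) - f t) := by
      rw [intervalIntegral.integral_sub intervalIntegrable_const (hintT i hi),
        intervalIntegral.integral_const]
      simp only [smul_eq_mul]
    rw [heq]
    have hbound : ∀ t ∈ Set.uIoc (T i) (T (i+1)), ‖f (T (i+1)) - f t‖ ≤ W i := by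
      intro t ht
      rw [Set.uIoc_of_le hab] at ht
      have ht' : t ∈ Set.Icc (T i) (T (i+1)) := ⟨le_of_lt ht.1, ht.2⟩
      have hbv : BoundedVariationOn f (Set.Icc (T i) (T (i+1))) := hVi_ne i
      have hd := hbv.dist_le (Set.right_mem_Icc.2 hab) ht'
      rw [Real.dist_eq] at hd
      simpa only [Real.norm_eq_abs, hW_def] using hd
    have hn := intervalIntegral.norm_integral_le_of_norm_le_const hbound
    rw [Real.norm_eq_abs] at hn
    calc |∫ t in (T i)..(T (i+1)), (f (T (i+1)) - f t)| ≤ W i * |T (i+1) - T i| := hn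
      _ ≤ W i * (1 / J) := by
          apply mul_le_mul_of_nonneg_left _ (hWnn i)
          rw [abs_of_nonneg (by linarith)]
          exact hmesh i hi
  have hWsum : ∑ i ∈ Finset.range K, W i ≤ V := by
    have h1 := evar_partition_sum f T hTmono K
    have h2 : eVariationOn f (Set.Icc (T 0) (T K)) ≤ ENNReal.ofReal V := by
      rw [hT0, hTK K le_rfl]
      exact hBV
    have h3 : ∑ i ∈ Finset.range K, eVariationOn f (Set.Icc (T i) (T (i+1)))
        ≤ ENNReal.ofReal V := h1.trans h2
    have h4 : (∑ i ∈ Finset.range K, eVariationOn f (Set.Icc (T i) (T (i+1)))).toReal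
        = ∑ i ∈ Finset.range K, W i := ENNReal.toReal_sum (fun i _ => hVi_ne i)
    calc ∑ i ∈ Finset.range K, W i = _ := h4.symm
      _ ≤ V := ENNReal.toReal_le_of_le_ofReal hV0 h3
  have hRbound : |R - ∫ t in (0:ℝ)..1, f t| ≤ V / J := by
    rw [hintegral, hR_def, ← Finset.sum_sub_distrib]
    calc |∑ i ∈ Finset.range K,
            ((T (i+1) - T i) * f (T (i+1)) - ∫ t in (T i)..(T (i+1)), f t)|
        ≤ ∑ i ∈ Finset.range K,
            |(T (i+1) - T i) * f (T (i+1)) - ∫ t in (T i)..(T (i+1)), f t| :=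
          Finset.abs_sum_le_sum_abs _ _
      _ ≤ ∑ i ∈ Finset.range K, W i * (1 / J) :=
          Finset.sum_le_sum (fun i hi => hterm i (Finset.mem_range.1 hi))
      _ = (∑ i ∈ Finset.range K, W i) * (1 / J) := (Finset.sum_mul _ _ _).symm
      _ ≤ V * (1 / J) := mul_le_mul_of_nonneg_right hWsum (by positivity)
      _ = V / J := by ring
  have hfinal : (1 / N : ℝ) * ∑ n, f (x n) - ∫ t in (0:ℝ)..1, f t
      = -S + (R - ∫ t in (0:ℝ)..1, f t) := by
    rw [hkey]
    ring
  rw [hfinal]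
  calc |(-S) + (R - ∫ t in (0:ℝ)..1, f t)| ≤ |(-S)| + |R - ∫ t in (0:ℝ)..1, f t| := abs_add_le _ _
    _ ≤ D * V + V / J := by
        rw [abs_neg]
        exact add_le_add hSbound hRbound
    _ = V * D + V / J := by ring


end Aux
/-- Koksma's inequality: if `f` has total variation at most `V` on `[0,1]` and the points
`x₁, …, x_N ∈ [0,1]` have discrepancy at most `D` (over all subintervals of `[0,1]`),
then the sampling error of `f` is at most `V·D`. -/
theorem koksma_inequality (f : ℝ → ℝ) (V : ℝ) (hV0 : 0 ≤ V)
    (hBV : eVariationOn f (Set.Icc 0 1) ≤ ENNReal.ofReal V)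
    (N : ℕ) (hN : 0 < N) (x : Fin N → ℝ) (hx : ∀ n, x n ∈ Set.Icc (0 : ℝ) 1)
    (D : ℝ)
    (hD : ∀ a b : ℝ, 0 ≤ a → a ≤ b → b ≤ 1 →
      |((Finset.univ.filter fun n => x n ∈ Set.Icc a b).card : ℝ) / N - (b - a)| ≤ D) :
    |(1 / N : ℝ) * ∑ n, f (x n) - ∫ t in (0 : ℝ)..1, f t| ≤ V * D := by
  apply le_of_forall_pos_le_add
  intro ε hε
  obtain ⟨J, hJ⟩ := exists_nat_gt (V / ε)
  have hJ0 : 0 < J := by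
    have h0 : (0:ℝ) ≤ V / ε := by positivity
    have : (0:ℝ) < J := lt_of_le_of_lt h0 hJ
    exact_mod_cast this
  have h1 := koksma_aux f V hV0 hBV N hN x hx D hD J hJ0
  have h2 : V / J ≤ ε := by
    rw [div_le_iff₀ (by exact_mod_cast hJ0 : (0:ℝ) < J)]
    have := (div_lt_iff₀ hε).1 hJ
    linarith
  linarith
end

section
/- Suppose for a family of point configurations with N → ∞ the number-variance bound ∫_{S²}|Z(Cap(ξ,δ)) − N σ(Cap(ξ,δ))|² dσ(ξ) ≤ C·N·σ(Cap(ξ,δ)) holds for all δ with σ(Cap(ξ,δ)) ≥ N^{-1}. Then the covering radius M of the configuration satisfies M ≤ C'·N^{-1/4} for a constant C' depending only on C. -/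
set_option maxHeartbeats 1000000


open MeasureTheory Metric Finset

/-- The normalized (probability) surface measure on the unit sphere `S² ⊂ ℝ³`. -/
noncomputable def sphereProbMeasure :
    Measure (sphere (0 : EuclideanSpace ℝ (Fin 3)) 1) :=
  ((volume : Measure (EuclideanSpace ℝ (Fin 3))).toSphere Set.univ)⁻¹ •
    (volume : Measure (EuclideanSpace ℝ (Fin 3))).toSphere

section AuxiliaryProof

open Set
open scoped Pointwise ENNReal

local notation "E" => EuclideanSpace ℝ (Fin 3)

lemma ball_subset_sector (x : sphere (0:E) 1) (δ : ℝ) (h0 : 0 < δ) (h2 : δ ≤ 2)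
    (s : ℝ) (hs1 : 1/2 ≤ s) (hs2 : s ≤ 5/8) :
    closedBall (s • (x:E)) (δ/17) ⊆
      Ioo (0:ℝ) 1 • ((↑) '' {ξ : sphere (0:E) 1 | dist (ξ:E) (x:E) ≤ δ}) := by
  intro y hy
  rw [mem_closedBall, dist_eq_norm] at hy
  have hxn : ‖(x:E)‖ = 1 := by
    have := x.2
    rwa [mem_sphere_zero_iff_norm] at this
  have hsx : ‖s • (x:E)‖ = s := by
    rw [norm_smul, hxn, mul_one, Real.norm_eq_abs, abs_of_nonneg (by linarith)]
  have hty : |‖y‖ - s| ≤ δ/17 := by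
    calc |‖y‖ - s| = |‖y‖ - ‖s • (x:E)‖| := by rw [hsx]
    _ ≤ ‖y - s • (x:E)‖ := abs_norm_sub_norm_le _ _
    _ ≤ δ/17 := hy
  have hty1 : s - δ/17 ≤ ‖y‖ := by have := abs_le.1 hty; linarith [this.2]
  have hty2 : ‖y‖ ≤ s + δ/17 := by have := abs_le.1 hty; linarith [(abs_le.1 hty).1]
  set t : ℝ := ‖y‖ with hT
  have ht0 : (13:ℝ)/34 ≤ t := by linarith
  have htpos : 0 < t := by linarith
  have ht1 : t < 1 := by linarith
  set z : E := t⁻¹ • y with hz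
  have hzn : ‖z‖ = 1 := by
    rw [hz, norm_smul, Real.norm_eq_abs, abs_of_pos (inv_pos.2 htpos), inv_mul_cancel₀ htpos.ne']
  have hzd : dist z (x:E) ≤ δ := by
    have h1 : ‖y - t • (x:E)‖ ≤ 2 * (δ/17) := by
      calc ‖y - t • (x:E)‖ ≤ ‖y - s • (x:E)‖ + ‖s • (x:E) - t • (x:E)‖ := by
            have := norm_sub_le_norm_sub_add_norm_sub y (s • (x:E)) (t • (x:E))
            linarith
      _ ≤ δ/17 + |s - t| := by
            rw [← sub_smul, norm_smul, hxn, mul_one, Real.norm_eq_abs]; linarith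
      _ ≤ 2 * (δ/17) := by
            have : |s - t| ≤ δ/17 := by rw [abs_sub_comm]; exact hty
            linarith
    have : dist z (x:E) = t⁻¹ * ‖y - t • (x:E)‖ := by
      rw [dist_eq_norm, hz]
      have : t⁻¹ • y - (x:E) = t⁻¹ • (y - t • (x:E)) := by
        rw [smul_sub, smul_smul, inv_mul_cancel₀ htpos.ne', one_smul]
      rw [this, norm_smul, Real.norm_eq_abs, abs_of_pos (inv_pos.2 htpos)]
    rw [this]
    calc t⁻¹ * ‖y - t • (x:E)‖ ≤ (34/13) * (2 * (δ/17)) := by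
          apply mul_le_mul _ h1 (norm_nonneg _) (by norm_num)
          rw [← one_div]
          rw [div_le_div_iff₀ htpos (by norm_num)]
          linarith
    _ ≤ δ := by linarith
  have hzS : z ∈ sphere (0:E) 1 := by rwa [mem_sphere_zero_iff_norm]
  have hmem : z ∈ (↑) '' {ξ : sphere (0:E) 1 | dist (ξ:E) (x:E) ≤ δ} :=
    ⟨⟨z, hzS⟩, hzd, rfl⟩
  have : y = t • z := by rw [hz, smul_smul, mul_inv_cancel₀ htpos.ne', one_smul]
  rw [this]
  exact Set.smul_mem_smul ⟨htpos, ht1⟩ hmem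

lemma cap_measure_lower (x : sphere (0:E) 1) (δ : ℝ) (h0 : 0 < δ) (h2 : δ ≤ 2) :
    ENNReal.ofReal (δ^2 / 4913) ≤ sphereProbMeasure {ξ : sphere (0:E) 1 | dist (ξ:E) (x:E) ≤ δ} := by
  set cap := {ξ : sphere (0:E) 1 | dist (ξ:E) (x:E) ≤ δ} with hcap
  have hcapm : MeasurableSet cap := by
    have : IsClosed cap := isClosed_le (by fun_prop) continuous_const
    exact this.measurableSet
  set m : ℕ := Nat.floor (1/δ) + 1 with hm
  set r : ℝ := δ/17 with hr
  set c : ℕ → E := fun k => (1/2 + k * (δ/8)) • (x:E) with hc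
  set V : ℝ≥0∞ := volume (ball (0:E) 1) with hV
  have hV0 : V ≠ 0 := (measure_ball_pos _ _ one_pos).ne'
  have hVtop : V ≠ ⊤ := measure_ball_lt_top.ne
  -- each ball is in the sector
  have hsub : ∀ k ∈ Finset.range m, closedBall (c k) r ⊆ Ioo (0:ℝ) 1 • (Subtype.val '' cap) := by
    intro k hk
    apply ball_subset_sector x δ h0 h2
    · linarith [mul_nonneg (Nat.cast_nonneg (α := ℝ) k) (by linarith : (0:ℝ) ≤ δ/8)]
    · have hkm := Finset.mem_range.1 hk
      have hk' : (k:ℝ) ≤ 1/δ := by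
        have hkf : k ≤ Nat.floor (1/δ) := by omega
        exact le_trans (Nat.cast_le.2 hkf) (Nat.floor_le (by positivity))
      have heq : (1/δ) * (δ/8) = 1/8 := by field_simp
      have : (k:ℝ) * (δ/8) ≤ 1/8 := by
        rw [← heq]
        exact mul_le_mul_of_nonneg_right hk' (by linarith)
      linarith
  -- disjointness
  have hdisj : (↑(Finset.range m) : Set ℕ).PairwiseDisjoint fun k => closedBall (c k) r := by
    intro k _ l _ hkl
    apply closedBall_disjoint_closedBall
    have hxn : ‖(x:E)‖ = 1 := by
      have := x.2; rwa [mem_sphere_zero_iff_norm] at this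
    have : dist (c k) (c l) = |(k:ℝ) - l| * (δ/8) := by
      rw [hc, dist_eq_norm, ← sub_smul, norm_smul, hxn, mul_one, Real.norm_eq_abs]
      have : (1/2 + (k:ℝ) * (δ/8)) - (1/2 + (l:ℝ) * (δ/8)) = ((k:ℝ) - l) * (δ/8) := by ring
      rw [this, abs_mul, abs_of_nonneg (by linarith : (0:ℝ) ≤ δ/8)]
    rw [this]
    have h1 : (1:ℝ) ≤ |(k:ℝ) - l| := by
      have hne : k ≠ l := hkl
      have hz : (1:ℤ) ≤ |(k:ℤ) - (l:ℤ)| := Int.one_le_abs (sub_ne_zero.2 (by exact_mod_cast hne))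
      have h2 : ((1:ℤ):ℝ) ≤ ((|(k:ℤ) - (l:ℤ)|:ℤ):ℝ) := Int.cast_le.2 hz
      rw [Int.cast_abs] at h2
      push_cast at h2
      exact h2
    have : δ/8 ≤ |(k:ℝ) - l| * (δ/8) := by nlinarith
    rw [hr]; linarith
  -- volume of the union
  have hunion : (m : ℝ≥0∞) * (ENNReal.ofReal (r^3) * V) ≤ volume (Ioo (0:ℝ) 1 • (Subtype.val '' cap)) := by
    have hball : ∀ k, volume (closedBall (c k) r) = ENNReal.ofReal (r^3) * V := fun k => by
      rw [Measure.addHaar_closedBall _ _ (by positivity : (0:ℝ) ≤ r), finrank_euclideanSpace_fin]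
    calc (m : ℝ≥0∞) * (ENNReal.ofReal (r^3) * V)
        = ∑ k ∈ Finset.range m, volume (closedBall (c k) r) := by
          simp only [hball, Finset.sum_const, Finset.card_range, nsmul_eq_mul]
    _ = volume (⋃ k ∈ Finset.range m, closedBall (c k) r) :=
          (measure_biUnion_finset hdisj fun k _ => measurableSet_closedBall).symm
    _ ≤ volume (Ioo (0:ℝ) 1 • (Subtype.val '' cap)) := by
          apply measure_mono
          exact Set.iUnion₂_subset hsub
  -- toSphere values
  have hTuniv : (volume : Measure E).toSphere Set.univ = 3 * V := by
    rw [Measure.toSphere_apply_univ, finrank_euclideanSpace_fin, hV]; norm_num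
  have hTcap : 3 * ((m : ℝ≥0∞) * (ENNReal.ofReal (r^3) * V)) ≤ (volume : Measure E).toSphere cap := by
    rw [Measure.toSphere_apply' _ hcapm, finrank_euclideanSpace_fin]
    exact mul_le_mul_right hunion 3
  -- combine
  have hfinal : (m : ℝ≥0∞) * ENNReal.ofReal (r^3) ≤ sphereProbMeasure cap := by
    have : sphereProbMeasure cap = ((3:ℝ≥0∞) * V)⁻¹ * (volume : Measure E).toSphere cap := by
      rw [sphereProbMeasure, Measure.smul_apply, smul_eq_mul, hTuniv]
    rw [this]
    calc (m : ℝ≥0∞) * ENNReal.ofReal (r^3)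
        = ((3:ℝ≥0∞) * V)⁻¹ * (3 * ((m : ℝ≥0∞) * (ENNReal.ofReal (r^3) * V))) := by
          rw [ENNReal.mul_inv (Or.inl (by norm_num)) (Or.inl (by norm_num))]
          rw [show (3:ℝ≥0∞)⁻¹ * V⁻¹ * (3 * ((m : ℝ≥0∞) * (ENNReal.ofReal (r^3) * V)))
              = (3⁻¹ * 3) * (V⁻¹ * V) * ((m : ℝ≥0∞) * ENNReal.ofReal (r^3)) by ring]
          rw [ENNReal.inv_mul_cancel (by norm_num) (by norm_num), ENNReal.inv_mul_cancel hV0 hVtop]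
          rw [one_mul, one_mul]
    _ ≤ ((3:ℝ≥0∞) * V)⁻¹ * (volume : Measure E).toSphere cap := mul_le_mul_right hTcap _
  refine le_trans ?_ hfinal
  have hmr : (1/δ) ≤ (m:ℝ) := by
    have := Nat.lt_floor_add_one (1/δ)
    push_cast [hm]
    linarith
  calc ENNReal.ofReal (δ^2/4913) ≤ ENNReal.ofReal ((1/δ) * (r^3)) := by
        apply ENNReal.ofReal_le_ofReal
        have : (1/δ) * (r^3) = δ^2/4913 := by rw [hr]; field_simp; ring
        rw [this]
  _ ≤ ENNReal.ofReal ((m:ℝ) * (r^3)) := by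
        apply ENNReal.ofReal_le_ofReal
        exact mul_le_mul_of_nonneg_right hmr (by positivity)
  _ = (m : ℝ≥0∞) * ENNReal.ofReal (r^3) := by
        rw [ENNReal.ofReal_mul (by positivity), ENNReal.ofReal_natCast]

instance : IsProbabilityMeasure sphereProbMeasure := by
  constructor
  have hV0 : volume (ball (0:E) 1) ≠ 0 := (measure_ball_pos _ _ one_pos).ne'
  have hVtop : volume (ball (0:E) 1) ≠ ⊤ := measure_ball_lt_top.ne
  have hTuniv : (volume : Measure E).toSphere Set.univ = 3 * volume (ball (0:E) 1) := by
    rw [Measure.toSphere_apply_univ, finrank_euclideanSpace_fin]; norm_num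
  rw [sphereProbMeasure, Measure.smul_apply, smul_eq_mul]
  rw [ENNReal.inv_mul_cancel]
  · rw [hTuniv]; exact mul_ne_zero (by norm_num) hV0
  · rw [hTuniv]; exact ENNReal.mul_ne_top (by norm_num) hVtop


/-- A number-variance upper bound `∫ |Z(Cap(ξ,δ)) - Nσ(Cap)|² dσ ≤ C·N·σ(Cap)` for all
caps with `σ(Cap(ξ,δ)) = δ²/4 ≥ N⁻¹` forces the covering radius to be `≤ C'·N^{-1/4}`,
with `C'` depending only on `C`. -/
theorem variance_bound_implies_covering (C : ℝ) (hC : 0 < C) :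
    ∃ C' : ℝ, 0 < C' ∧ ∀ (N : ℕ), 0 < N →
      ∀ P : Fin N → sphere (0 : EuclideanSpace ℝ (Fin 3)) 1,
      (∀ δ : ℝ, 0 < δ → δ ≤ 2 → ((N : ℝ))⁻¹ ≤ δ ^ 2 / 4 →
        (∫ ξ, (((Finset.univ.filter fun j =>
              dist (P j : EuclideanSpace ℝ (Fin 3)) (ξ : EuclideanSpace ℝ (Fin 3)) ≤ δ).card : ℝ)
            - (N : ℝ) * (δ ^ 2 / 4)) ^ 2 ∂sphereProbMeasure) ≤ C * N * (δ ^ 2 / 4)) →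
      ∀ x : sphere (0 : EuclideanSpace ℝ (Fin 3)) 1,
        ∃ j, dist (x : EuclideanSpace ℝ (Fin 3)) (P j : EuclideanSpace ℝ (Fin 3)) ≤
          C' * (N : ℝ) ^ (-(1 : ℝ) / 4) := by
  set c₀ : ℝ := 314432 * C + 1 with hc₀
  have hc₀0 : 0 < c₀ := by positivity
  set C' : ℝ := 4 + c₀ ^ ((1:ℝ)/4) with hC'
  have hrpow0 : 0 ≤ c₀ ^ ((1:ℝ)/4) := Real.rpow_nonneg hc₀0.le _
  have hC'4 : 4 ≤ C' := by rw [hC']; linarith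
  have hC'0 : 0 < C' := by linarith
  have hC'pow : c₀ ≤ C' ^ 4 := by
    have h1 : (c₀ ^ ((1:ℝ)/4)) ^ 4 = c₀ := by
      rw [← Real.rpow_natCast (c₀ ^ ((1:ℝ)/4)) 4, ← Real.rpow_mul hc₀0.le]
      norm_num
    rw [← h1]
    apply pow_le_pow_left₀ hrpow0
    rw [hC']; linarith
  refine ⟨C', hC'0, ?_⟩
  intro N hN P hvar x
  set u : ℝ := (N:ℝ) ^ (-(1:ℝ)/4) with hu
  have hN1 : (1:ℝ) ≤ N := by exact_mod_cast hN
  have hu0 : 0 < u := Real.rpow_pos_of_pos (by linarith) _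
  have hu1 : u ≤ 1 := Real.rpow_le_one_of_one_le_of_nonpos hN1 (by norm_num)
  have hu4 : u ^ 4 = ((N:ℝ))⁻¹ := by
    rw [hu, ← Real.rpow_natCast ((N:ℝ) ^ (-(1:ℝ)/4)) 4, ← Real.rpow_mul (by linarith)]
    norm_num [Real.rpow_neg_one]
  set ρ : ℝ := C' * u with hρdef
  by_cases hρ : 2 ≤ ρ
  · refine ⟨⟨0, hN⟩, le_trans ?_ hρ⟩
    have h1 : dist (x : E) 0 = 1 := by
      have := x.2; rwa [Metric.mem_sphere] at this
    have h2 : dist (0:E) (P ⟨0, hN⟩ : E) = 1 := by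
      have := (P ⟨0, hN⟩).2; rw [Metric.mem_sphere] at this; rw [dist_comm]; exact this
    calc dist (x:E) (P ⟨0, hN⟩ : E) ≤ dist (x:E) 0 + dist (0:E) (P ⟨0, hN⟩ : E) :=
          dist_triangle _ _ _
    _ ≤ 2 := by rw [h1, h2]; norm_num
  · push_neg at hρ
    by_contra hcon
    push_neg at hcon
    set δ : ℝ := ρ/2 with hδdef
    have hρ0 : 0 < ρ := mul_pos hC'0 hu0
    have hδ0 : 0 < δ := by rw [hδdef]; linarith
    have hδ2 : δ ≤ 2 := by rw [hδdef]; linarith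
    have h2u : 2*u ≤ δ := by
      rw [hδdef, hρdef]
      nlinarith [mul_le_mul_of_nonneg_right hC'4 hu0.le]
    have hNinv : ((N:ℝ))⁻¹ ≤ δ^2/4 := by
      rw [← hu4]
      have h1 : u^2 ≤ δ^2/4 := by nlinarith [hu0.le, hδ0.le]
      nlinarith [pow_le_one₀ hu0.le hu1 (n := 2), sq_nonneg u, hu0.le]
    have hkey := hvar δ hδ0 hδ2 hNinv
    clear hvar
    set a : ℝ := (N:ℝ) * (δ^2/4) with ha
    have ha0 : 0 ≤ a := by rw [ha]; positivity
    have hδ1 : δ^2/4 ≤ 1 := by nlinarith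
    have haN : a ≤ N := by
      rw [ha]
      have h3 := mul_le_mul_of_nonneg_left hδ1 (Nat.cast_nonneg N : (0:ℝ) ≤ (N:ℝ))
      rw [mul_one] at h3
      exact h3
    set cap := {ξ : sphere (0:E) 1 | dist (ξ:E) (x:E) ≤ δ} with hcapdef
    have hcapm : MeasurableSet cap := by
      have : IsClosed cap := isClosed_le (by fun_prop) continuous_const
      exact this.measurableSet
    have hzero : ∀ ξ ∈ cap, (Finset.univ.filter fun j =>
        dist (P j : E) (ξ : E) ≤ δ).card = 0 := by
      intro ξ hξ
      rw [Finset.card_eq_zero, Finset.filter_eq_empty_iff]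
      intro j _ hj
      have hle : dist (x:E) (P j : E) ≤ ρ := by
        calc dist (x:E) (P j : E) ≤ dist (x:E) (ξ:E) + dist (ξ:E) (P j : E) :=
              dist_triangle _ _ _
        _ ≤ δ + δ := add_le_add (by rw [dist_comm]; exact hξ) (by rw [dist_comm]; exact hj)
        _ = ρ := by rw [hδdef]; ring
      exact absurd hle (not_le.2 (hcon j))
    set f : sphere (0:E) 1 → ℝ := fun ξ => (((Finset.univ.filter fun j =>
        dist (P j : E) (ξ : E) ≤ δ).card : ℝ) - a) ^ 2 with hf
    have hZmeas : Measurable fun ξ : sphere (0:E) 1 => ((Finset.univ.filter fun j =>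
        dist (P j : E) (ξ : E) ≤ δ).card : ℝ) := by
      have heq : (fun ξ : sphere (0:E) 1 => ((Finset.univ.filter fun j =>
          dist (P j : E) (ξ : E) ≤ δ).card : ℝ)) =
          fun ξ : sphere (0:E) 1 =>
            ∑ j : Fin N, if dist (P j : E) (ξ : E) ≤ δ then (1:ℝ) else 0 := by
        funext ξ
        rw [Finset.card_filter]
        push_cast
        rfl
      rw [heq]
      apply Finset.measurable_sum
      intro j _
      exact Measurable.ite (measurableSet_le (by fun_prop) measurable_const)
        measurable_const measurable_const
    have hfmeas : Measurable f := (hZmeas.sub measurable_const).pow_const 2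
    have hfbound : ∀ ξ, ‖f ξ‖ ≤ (N:ℝ)^2 := by
      intro ξ
      set Z : ℝ := ((Finset.univ.filter fun j => dist (P j : E) (ξ : E) ≤ δ).card : ℝ) with hZ
      have hfe : f ξ = (Z - a)^2 := rfl
      rw [hfe, Real.norm_eq_abs, abs_of_nonneg (sq_nonneg _)]
      have hZ0 : 0 ≤ Z := Nat.cast_nonneg _
      have hZN : Z ≤ N := by
        have h := Finset.card_filter_le (Finset.univ : Finset (Fin N))
          (fun j => dist (P j : E) (ξ:E) ≤ δ)
        rw [Finset.card_univ, Fintype.card_fin] at h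
        rw [hZ]
        exact_mod_cast h
      nlinarith [mul_nonneg (by linarith : (0:ℝ) ≤ (N:ℝ) - Z + a)
        (by linarith : (0:ℝ) ≤ (N:ℝ) + Z - a)]
    have hfint : Integrable f sphereProbMeasure := by
      apply Integrable.mono' (integrable_const ((N:ℝ)^2)) hfmeas.aestronglyMeasurable
      exact Filter.Eventually.of_forall hfbound
    have hptwise : ∀ ξ, cap.indicator (fun _ => a^2) ξ ≤ f ξ := by
      intro ξ
      by_cases hξ : ξ ∈ cap
      · rw [Set.indicator_of_mem hξ]
        have hfe : f ξ = (((Finset.univ.filter fun j =>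
            dist (P j : E) (ξ : E) ≤ δ).card : ℝ) - a) ^ 2 := rfl
        rw [hfe, hzero ξ hξ]
        norm_num
      · rw [Set.indicator_of_notMem hξ]
        exact sq_nonneg _
    have hgint : Integrable (cap.indicator (fun _ => a^2)) sphereProbMeasure :=
      (integrable_const (a^2)).indicator hcapm
    have hlow : a^2 * (sphereProbMeasure cap).toReal ≤ ∫ ξ, f ξ ∂sphereProbMeasure := by
      have h1 := integral_mono hgint hfint hptwise
      rwa [integral_indicator_const _ hcapm, smul_eq_mul, measureReal_def,
        mul_comm ((sphereProbMeasure cap).toReal) (a^2)] at h1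
    have hcapR : δ^2/4913 ≤ (sphereProbMeasure cap).toReal := by
      have h1 := cap_measure_lower x δ hδ0 hδ2
      have h2 := ENNReal.toReal_mono (measure_ne_top _ _) h1
      rwa [ENNReal.toReal_ofReal (by positivity)] at h2
    have hcomb : a^2 * (δ^2/4913) ≤ C * N * (δ^2/4) := by
      calc a^2 * (δ^2/4913) ≤ a^2 * (sphereProbMeasure cap).toReal :=
            mul_le_mul_of_nonneg_left hcapR (sq_nonneg _)
      _ ≤ ∫ ξ, f ξ ∂sphereProbMeasure := hlow
      _ ≤ C * N * (δ^2/4) := hkey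
    rw [ha] at hcomb
    have hp : 0 < (N:ℝ)*δ^2 := by positivity
    have hNδ : (N:ℝ)*δ^4 ≤ 19652 * C := by
      have h2 : (N:ℝ)*δ^4 * ((N:ℝ)*δ^2) ≤ 19652*C * ((N:ℝ)*δ^2) := by nlinarith [hcomb]
      exact le_of_mul_le_mul_right h2 hp
    have hδ4 : δ^4 = C'^4 * u^4 / 16 := by rw [hδdef, hρdef]; ring
    have hNfin : 0 < (N:ℝ) := by linarith
    have hfin : c₀/16 ≤ (N:ℝ) * δ^4 := by
      rw [hδ4, hu4]
      have heq2 : (N:ℝ) * (C'^4 * ((N:ℝ))⁻¹ / 16) = C'^4/16 := by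
        field_simp
      rw [heq2]
      have h16 : (0:ℝ) ≤ 16 := by norm_num
      exact div_le_div_of_nonneg_right hC'pow h16
    rw [hc₀] at hfin
    linarith

end AuxiliaryProof
end
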